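/- Let p and p' be positive integers, let q be an integer coprime to p and q' an integer coprime to p'. Then Z_k(p,q) = Z_k(p',q') for every natural number k if and only if p = p' and there exists an integer a such that q·q' ≡ a² (mod p). (This is the number-theoretic content of the theorem that the U(1) homotopy Dijkgraaf–Witten invariants distinguish homotopy equivalence classes of lens spaces, since Z_k(p,q̄) with q̄q ≡ 1 (mod p) is the level-k invariant of L(p,q) and two lens spaces L(p,q), L(p',q') are orientation-preservingly homotopy equivalent iff p = p' and qq' ≡ a² (mod p) for some integer a.) -/

import Mathlib

open Complex Finset

/-- The normalized Gauss sum `Z_k(p,q) = (1/p) · ∑_{l=1}^p exp(2πi·k·q·l²/p)`. -/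
noncomputable def dwInvariant (k : ℕ) (p : ℕ) (q : ℤ) : ℂ :=
  (1 / (p : ℂ)) *
    ∑ l ∈ Finset.Icc 1 p,
      Complex.exp (2 * Real.pi * Complex.I * (k : ℂ) * (q : ℂ) * (l : ℂ) ^ 2 / (p : ℂ))

namespace DWAux

/-- The standard additive character `m ↦ exp(2πi m/p)`. -/
noncomputable def E (p : ℕ) (m : ℤ) : ℂ :=
  Complex.exp (2 * Real.pi * Complex.I * (m : ℂ) / (p : ℂ))

lemma pC_ne {p : ℕ} (hp : 0 < p) : (p : ℂ) ≠ 0 := by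
  exact_mod_cast Nat.cast_ne_zero.mpr hp.ne'

lemma E_add (p : ℕ) (m n : ℤ) : E p (m + n) = E p m * E p n := by
  rw [E, E, E, ← Complex.exp_add]
  congr 1
  push_cast
  ring

lemma E_zero (p : ℕ) : E p 0 = 1 := by
  simp [E]

lemma E_eq_one_of_dvd {p : ℕ} (hp : 0 < p) {m : ℤ} (h : (p : ℤ) ∣ m) : E p m = 1 := by
  obtain ⟨t, rfl⟩ := h
  rw [E]
  have : 2 * (Real.pi : ℂ) * Complex.I * ((((p : ℤ) * t : ℤ) : ℂ)) / (p : ℂ)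
      = (t : ℂ) * (2 * Real.pi * Complex.I) := by
    have hpne := pC_ne hp
    push_cast
    field_simp
  rw [this]
  exact Complex.exp_int_mul_two_pi_mul_I t

lemma E_eq_one_iff {p : ℕ} (hp : 0 < p) {m : ℤ} : E p m = 1 ↔ (p : ℤ) ∣ m := by
  constructor
  · intro h
    rw [E, Complex.exp_eq_one_iff] at h
    obtain ⟨n, hn⟩ := h
    have hpne := pC_ne hp
    have h2 : (2 : ℂ) * Real.pi * Complex.I ≠ 0 := by
      simp [Real.pi_ne_zero, Complex.I_ne_zero]
    have : (m : ℂ) = (n : ℂ) * (p : ℂ) := by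
      field_simp at hn
      -- hn : 2 * π * I * m = n * (2 * π * I) * p  (roughly)
      have := hn
      -- cancel 2πI
      apply mul_left_cancel₀ h2
      linear_combination (2 * (Real.pi : ℂ) * Complex.I) * this
    have : ((m : ℤ) : ℂ) = ((n * p : ℤ) : ℂ) := by push_cast; linear_combination this
    have hm : m = n * p := by exact_mod_cast this
    exact ⟨n, by rw [hm]; ring⟩
  · exact E_eq_one_of_dvd hp

lemma E_congr {p : ℕ} (hp : 0 < p) {m n : ℤ} (h : (p : ℤ) ∣ m - n) : E p m = E p n := by
  have : E p m = E p (n + (m - n)) := by congr 1; ring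
  rw [this, E_add, E_eq_one_of_dvd hp h, mul_one]

lemma E_pow (p : ℕ) (m : ℤ) (k : ℕ) : E p m ^ k = E p (k * m) := by
  rw [E, E, ← Complex.exp_nat_mul]
  congr 1
  push_cast
  ring

lemma E_sum_geom {p : ℕ} (hp : 0 < p) (m : ℤ) :
    ∑ k ∈ Finset.range p, E p ((k : ℤ) * m) = if (p : ℤ) ∣ m then (p : ℂ) else 0 := by
  split_ifs with h
  · have : ∀ k ∈ Finset.range p, E p ((k : ℤ) * m) = 1 := fun k _ =>
      E_eq_one_of_dvd hp (Dvd.dvd.mul_left h _)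
    rw [Finset.sum_congr rfl this]
    simp
  · have h1 : E p m ≠ 1 := fun hc => h ((E_eq_one_iff hp).mp hc)
    have : ∀ k ∈ Finset.range p, E p ((k : ℤ) * m) = (E p m) ^ k := fun k _ => by
      rw [E_pow]
    rw [Finset.sum_congr rfl this, geom_sum_eq h1, E_pow, E_eq_one_of_dvd hp ⟨m, rfl⟩]
    simp

lemma dw_eq_range {p : ℕ} (hp : 0 < p) (k : ℕ) (q : ℤ) :
    dwInvariant k p q = (1 / (p : ℂ)) * ∑ l ∈ Finset.range p, E p ((k : ℤ) * q * (l : ℤ) ^ 2) := by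
  rw [dwInvariant]
  congr 1
  have hterm : ∀ l : ℕ,
      Complex.exp (2 * Real.pi * Complex.I * (k : ℂ) * (q : ℂ) * (l : ℂ) ^ 2 / (p : ℂ))
        = E p ((k : ℤ) * q * (l : ℤ) ^ 2) := by
    intro l
    rw [E]
    congr 1
    push_cast
    ring
  have hins : Finset.range (p + 1) = insert 0 (Finset.Icc 1 p) := by
    ext x
    simp only [Finset.mem_range, Finset.mem_insert, Finset.mem_Icc]
    omega
  have h0 : (0 : ℕ) ∉ Finset.Icc 1 p := by simp
  have hpp : E p ((k : ℤ) * q * (p : ℤ) ^ 2) = E p ((k : ℤ) * q * (0 : ℤ) ^ 2) := by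
    apply E_congr hp
    exact ⟨(k : ℤ) * q * p, by ring⟩
  calc ∑ l ∈ Finset.Icc 1 p,
        Complex.exp (2 * Real.pi * Complex.I * (k : ℂ) * (q : ℂ) * (l : ℂ) ^ 2 / (p : ℂ))
      = ∑ l ∈ Finset.Icc 1 p, E p ((k : ℤ) * q * (l : ℤ) ^ 2) :=
        Finset.sum_congr rfl fun l _ => hterm l
    _ = ∑ l ∈ Finset.range (p + 1), E p ((k : ℤ) * q * (l : ℤ) ^ 2)
          - E p ((k : ℤ) * q * (0 : ℤ) ^ 2) := by
        rw [hins, Finset.sum_insert h0]; push_cast; ring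
    _ = ∑ l ∈ Finset.range p, E p ((k : ℤ) * q * (l : ℤ) ^ 2) := by
        rw [Finset.sum_range_succ, hpp]; ring

lemma dw_one_of_dvd {p : ℕ} (hp : 0 < p) {k : ℕ} (q : ℤ) (hk : p ∣ k) :
    dwInvariant k p q = 1 := by
  rw [dw_eq_range hp]
  have : ∀ l ∈ Finset.range p, E p ((k : ℤ) * q * (l : ℤ) ^ 2) = 1 := by
    intro l _
    apply E_eq_one_of_dvd hp
    exact Dvd.dvd.mul_right (Dvd.dvd.mul_right (Int.natCast_dvd_natCast.mpr hk) q) _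
  rw [Finset.sum_congr rfl this]
  simp [pC_ne hp]

lemma re_eq_one {z : ℂ} (habs : ‖z‖ = 1) (hre : z.re = 1) : z = 1 := by
  have hsq : Complex.normSq z = 1 := by
    have := Complex.sq_norm z
    rw [habs] at this
    simpa using this.symm
  rw [Complex.normSq_apply, hre] at hsq
  have him : z.im = 0 := by nlinarith [sq_nonneg z.im]
  exact Complex.ext (by simp [hre]) (by simp [him])

lemma E_ofReal (p : ℕ) (m : ℤ) :
    E p m = Complex.exp (((2 * Real.pi * (m : ℝ) / (p : ℝ) : ℝ) : ℂ) * Complex.I) := by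
  rw [E]
  congr 1
  push_cast
  ring

lemma E_re_le_one (p : ℕ) (m : ℤ) : (E p m).re ≤ 1 := by
  rw [E_ofReal, Complex.exp_ofReal_mul_I_re]
  exact Real.cos_le_one _

lemma E_abs (p : ℕ) (m : ℤ) : ‖E p m‖ = 1 := by
  rw [E_ofReal]
  exact Complex.norm_exp_ofReal_mul_I _

lemma dvd_of_dw_one {p : ℕ} (hp : 0 < p) {k : ℕ} {q : ℤ}
    (hq : IsCoprime q (p : ℤ)) (h : dwInvariant k p q = 1) : p ∣ k := by
  rcases eq_or_lt_of_le (Nat.succ_le_of_lt hp : 1 ≤ p) with h1 | h1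
  · exact (by omega : p = 1) ▸ one_dvd k
  -- p ≥ 2
  rw [dw_eq_range hp] at h
  have hsum : ∑ l ∈ Finset.range p, E p ((k : ℤ) * q * (l : ℤ) ^ 2) = (p : ℂ) := by
    rw [one_div_mul_eq_div, div_eq_iff (pC_ne hp), one_mul] at h
    exact h
  have hre : ∑ l ∈ Finset.range p, (E p ((k : ℤ) * q * (l : ℤ) ^ 2)).re = (p : ℝ) := by
    have := congrArg Complex.re hsum
    rwa [Complex.re_sum] at this
  have hle : ∀ l ∈ Finset.range p, (E p ((k : ℤ) * q * (l : ℤ) ^ 2)).re ≤ 1 :=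
    fun l _ => E_re_le_one p _
  have hone : ∑ l ∈ Finset.range p, (1 : ℝ) = (p : ℝ) := by simp
  have hall := (Finset.sum_eq_sum_iff_of_le hle).mp (by rw [hre, hone])
  have h1mem : (1 : ℕ) ∈ Finset.range p := Finset.mem_range.mpr h1
  have hre1 : (E p ((k : ℤ) * q * ((1 : ℕ) : ℤ) ^ 2)).re = 1 := hall 1 h1mem
  have hE1 : E p ((k : ℤ) * q * ((1 : ℕ) : ℤ) ^ 2) = 1 :=
    re_eq_one (E_abs p _) hre1
  have hdvd : (p : ℤ) ∣ (k : ℤ) * q := by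
    have := (E_eq_one_iff hp).mp hE1
    simpa using this
  have : (p : ℤ) ∣ (k : ℤ) := (hq.symm).dvd_of_dvd_mul_right hdvd
  exact_mod_cast this

/-- Counting function: number of `l ∈ [0, p)` with `q·l² ≡ a (mod p)`. -/
def cnt (p : ℕ) (q a : ℤ) : ℕ :=
  ((Finset.range p).filter (fun l : ℕ => (p : ℤ) ∣ (q * (l : ℤ) ^ 2 - a))).card

lemma invA {p : ℕ} (hp : 0 < p) (q a : ℤ) :
    ∑ k ∈ Finset.range p, dwInvariant k p q * E p (-((k : ℤ) * a)) = (cnt p q a : ℂ) := by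
  calc ∑ k ∈ Finset.range p, dwInvariant k p q * E p (-((k : ℤ) * a))
      = ∑ k ∈ Finset.range p, ∑ l ∈ Finset.range p,
          (1 / (p : ℂ)) * (E p ((k : ℤ) * q * (l : ℤ) ^ 2) * E p (-((k : ℤ) * a))) := by
        refine Finset.sum_congr rfl fun k _ => ?_
        rw [dw_eq_range hp, mul_assoc, Finset.sum_mul, Finset.mul_sum]
    _ = ∑ l ∈ Finset.range p, ∑ k ∈ Finset.range p,
          (1 / (p : ℂ)) * E p ((k : ℤ) * (q * (l : ℤ) ^ 2 - a)) := by
        rw [Finset.sum_comm]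
        refine Finset.sum_congr rfl fun l _ => Finset.sum_congr rfl fun k _ => ?_
        rw [← E_add]
        congr 2
        ring
    _ = ∑ l ∈ Finset.range p, (if (p : ℤ) ∣ (q * (l : ℤ) ^ 2 - a) then (1 : ℂ) else 0) := by
        refine Finset.sum_congr rfl fun l _ => ?_
        rw [← Finset.mul_sum, E_sum_geom hp]
        split_ifs
        · exact one_div_mul_cancel (pC_ne hp)
        · simp
    _ = (cnt p q a : ℂ) := by rw [Finset.sum_boole, cnt]

lemma inner_sum {p : ℕ} (hp : 0 < p) (q : ℤ) (k l : ℕ) :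
    ∑ a ∈ Finset.range p, (if (p : ℤ) ∣ (q * (l : ℤ) ^ 2 - (a : ℤ)) then E p ((k : ℤ) * a) else 0)
      = E p ((k : ℤ) * q * (l : ℤ) ^ 2) := by
  have hpz : (0 : ℤ) < (p : ℤ) := by exact_mod_cast hp
  set r : ℤ := (q * (l : ℤ) ^ 2) % (p : ℤ) with hr
  have hr0 : 0 ≤ r := Int.emod_nonneg _ hpz.ne'
  have hrlt : r < (p : ℤ) := Int.emod_lt_of_pos _ hpz
  set a₀ : ℕ := r.toNat with ha₀
  have ha₀r : (a₀ : ℤ) = r := Int.toNat_of_nonneg hr0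
  have ha₀lt : a₀ < p := by omega
  have hdvd0 : (p : ℤ) ∣ (q * (l : ℤ) ^ 2 - (a₀ : ℤ)) := by
    rw [ha₀r, hr]
    exact ⟨q * (l : ℤ) ^ 2 / (p : ℤ), by rw [Int.emod_def]; ring⟩
  have hiff : ∀ a ∈ Finset.range p,
      ((p : ℤ) ∣ (q * (l : ℤ) ^ 2 - (a : ℤ))) ↔ a = a₀ := by
    intro a ha
    have halt : a < p := Finset.mem_range.mp ha
    constructor
    · intro hd
      have hd2 : (p : ℤ) ∣ ((a : ℤ) - (a₀ : ℤ)) := by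
        have := dvd_sub hdvd0 hd
        have h3 : (q * (l : ℤ) ^ 2 - (a₀ : ℤ)) - (q * (l : ℤ) ^ 2 - (a : ℤ))
            = (a : ℤ) - (a₀ : ℤ) := by ring
        rwa [h3] at this
      have : (a : ℤ) - (a₀ : ℤ) = 0 := by
        apply Int.eq_zero_of_abs_lt_dvd hd2
        rw [abs_lt]
        omega
      omega
    · rintro rfl
      exact hdvd0
  calc ∑ a ∈ Finset.range p,
        (if (p : ℤ) ∣ (q * (l : ℤ) ^ 2 - (a : ℤ)) then E p ((k : ℤ) * a) else 0)
      = ∑ a ∈ Finset.range p, (if a = a₀ then E p ((k : ℤ) * a) else 0) := by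
        refine Finset.sum_congr rfl fun a ha => ?_
        rw [if_congr (hiff a ha) rfl rfl]
    _ = E p ((k : ℤ) * a₀) := by
        rw [Finset.sum_ite_eq' (Finset.range p) a₀ (fun a => E p ((k : ℤ) * a)),
          if_pos (Finset.mem_range.mpr ha₀lt)]
    _ = E p ((k : ℤ) * q * (l : ℤ) ^ 2) := by
        apply E_congr hp
        obtain ⟨c, hc⟩ := hdvd0
        exact ⟨-(k : ℤ) * c, by linear_combination (-(k:ℤ)) * hc⟩

lemma invB {p : ℕ} (hp : 0 < p) (q : ℤ) (k : ℕ) :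
    (p : ℂ) * dwInvariant k p q
      = ∑ a ∈ Finset.range p, (cnt p q (a : ℤ) : ℂ) * E p ((k : ℤ) * a) := by
  symm
  calc ∑ a ∈ Finset.range p, (cnt p q (a : ℤ) : ℂ) * E p ((k : ℤ) * a)
      = ∑ a ∈ Finset.range p, ∑ l ∈ Finset.range p,
          (if (p : ℤ) ∣ (q * (l : ℤ) ^ 2 - (a : ℤ)) then E p ((k : ℤ) * a) else 0) := by
        refine Finset.sum_congr rfl fun a _ => ?_
        rw [cnt, ← Finset.sum_boole, Finset.sum_mul]
        refine Finset.sum_congr rfl fun l _ => ?_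
        split_ifs <;> simp
    _ = ∑ l ∈ Finset.range p, ∑ a ∈ Finset.range p,
          (if (p : ℤ) ∣ (q * (l : ℤ) ^ 2 - (a : ℤ)) then E p ((k : ℤ) * a) else 0) :=
        Finset.sum_comm
    _ = ∑ l ∈ Finset.range p, E p ((k : ℤ) * q * (l : ℤ) ^ 2) :=
        Finset.sum_congr rfl fun l _ => inner_sum hp q k l
    _ = (p : ℂ) * dwInvariant k p q := by
        rw [dw_eq_range hp, ← mul_assoc, mul_one_div, div_self (pC_ne hp), one_mul]

lemma cnt_eq_card_zmod {p : ℕ} [NeZero p] (q a : ℤ) :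
    cnt p q a
      = (Finset.univ.filter
          (fun x : ZMod p => (q : ZMod p) * x ^ 2 = (a : ZMod p))).card := by
  rw [cnt]
  apply Finset.card_bij' (fun l _ => ((l : ℕ) : ZMod p)) (fun x _ => x.val)
  · intro l hl
    rw [Finset.mem_filter] at hl ⊢
    refine ⟨Finset.mem_univ _, ?_⟩
    have hd := hl.2
    have : ((q * (l : ℤ) ^ 2 - a : ℤ) : ZMod p) = 0 :=
      (ZMod.intCast_zmod_eq_zero_iff_dvd _ p).mpr hd
    push_cast at this
    linear_combination this
  · intro x hx
    rw [Finset.mem_filter] at hx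
    rw [Finset.mem_filter]
    refine ⟨Finset.mem_range.mpr (ZMod.val_lt x), ?_⟩
    rw [← ZMod.intCast_zmod_eq_zero_iff_dvd]
    push_cast
    have hxv : ((x.val : ℕ) : ZMod p) = x := ZMod.natCast_rightInverse x
    rw [hxv]
    linear_combination hx.2
  · intro l hl
    exact ZMod.val_cast_of_lt (Finset.mem_range.mp (Finset.mem_filter.mp hl).1)
  · intro x _
    exact ZMod.natCast_rightInverse x

lemma cnt_shift {p : ℕ} [NeZero p] (q q' a : ℤ) (c : (ZMod p)ˣ)
    (hc : (q' : ZMod p) = (q : ZMod p) * (c : ZMod p) ^ 2) :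
    cnt p q' a = cnt p q a := by
  rw [cnt_eq_card_zmod, cnt_eq_card_zmod]
  apply Finset.card_bij' (fun x _ => (c : ZMod p) * x) (fun y _ => ((c⁻¹ : (ZMod p)ˣ) : ZMod p) * y)
  · intro x hx
    rw [Finset.mem_filter] at hx ⊢
    refine ⟨Finset.mem_univ _, ?_⟩
    have := hx.2
    rw [hc] at this
    linear_combination this
  · intro y hy
    rw [Finset.mem_filter] at hy ⊢
    refine ⟨Finset.mem_univ _, ?_⟩
    rw [hc]
    have hcc : (c : ZMod p) * ((c⁻¹ : (ZMod p)ˣ) : ZMod p) = 1 := by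
      rw [← Units.val_mul, mul_inv_cancel, Units.val_one]
    have := hy.2
    calc (q : ZMod p) * (c : ZMod p) ^ 2 * (((c⁻¹ : (ZMod p)ˣ) : ZMod p) * y) ^ 2
        = (q : ZMod p) * ((c : ZMod p) * ((c⁻¹ : (ZMod p)ˣ) : ZMod p)) ^ 2 * y ^ 2 := by ring
      _ = (q : ZMod p) * y ^ 2 := by rw [hcc]; ring
      _ = (a : ZMod p) := this
  · intro x _
    rw [← mul_assoc, ← Units.val_mul, inv_mul_cancel, Units.val_one, one_mul]
  · intro y _
    rw [← mul_assoc, ← Units.val_mul, mul_inv_cancel, Units.val_one, one_mul]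

lemma isUnit_cast {p : ℕ} {q : ℤ} (hq : IsCoprime q (p : ℤ)) : IsUnit (q : ZMod p) := by
  obtain ⟨u, v, huv⟩ := hq
  apply IsUnit.of_mul_eq_one (b := ((u : ℤ) : ZMod p))
  have : ((u * q + v * p : ℤ) : ZMod p) = ((1 : ℤ) : ZMod p) := by rw [huv]
  push_cast at this
  rw [ZMod.natCast_self] at this
  simp at this
  linear_combination this

end DWAux

theorem lens_space_invariants_classify (p p' : ℕ) (hp : 0 < p) (hp' : 0 < p')
    (q q' : ℤ) (hq : IsCoprime q (p : ℤ)) (hq' : IsCoprime q' (p' : ℤ)) :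
    (∀ k : ℕ, dwInvariant k p q = dwInvariant k p' q') ↔
      (p = p' ∧ ∃ a : ℤ, q * q' ≡ a ^ 2 [ZMOD (p : ℤ)]) := by
  constructor
  · intro H
    have hpp' : p = p' := by
      have h1 : dwInvariant p' p q = 1 := by
        rw [H p']; exact DWAux.dw_one_of_dvd hp' q' dvd_rfl
      have h2 : dwInvariant p p' q' = 1 := by
        rw [← H p]; exact DWAux.dw_one_of_dvd hp q dvd_rfl
      exact Nat.dvd_antisymm (DWAux.dvd_of_dw_one hp hq h1) (DWAux.dvd_of_dw_one hp' hq' h2)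
    subst hpp'
    refine ⟨rfl, ?_⟩
    have hcnt : ∀ a : ℤ, DWAux.cnt p q a = DWAux.cnt p q' a := by
      intro a
      have h1 := DWAux.invA hp q a
      have h2 := DWAux.invA hp q' a
      have h3 : ∑ k ∈ Finset.range p, dwInvariant k p q * DWAux.E p (-((k : ℤ) * a))
          = ∑ k ∈ Finset.range p, dwInvariant k p q' * DWAux.E p (-((k : ℤ) * a)) :=
        Finset.sum_congr rfl fun k _ => by rw [H k]
      have : (DWAux.cnt p q a : ℂ) = (DWAux.cnt p q' a : ℂ) := by
        rw [← h1, ← h2, h3]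
      exact_mod_cast this
    rcases eq_or_lt_of_le (Nat.succ_le_of_lt hp : 1 ≤ p) with h1 | h1
    · refine ⟨0, ?_⟩
      have : p = 1 := by omega
      subst this
      rw [Int.modEq_iff_dvd]
      exact_mod_cast one_dvd _
    · -- p ≥ 2
      have hmem : (1 : ℕ) ∈ (Finset.range p).filter
          (fun l : ℕ => (p : ℤ) ∣ (q * (l : ℤ) ^ 2 - q)) := by
        rw [Finset.mem_filter]
        exact ⟨Finset.mem_range.mpr h1, by push_cast; simp⟩
      have hne : DWAux.cnt p q q ≠ 0 := by
        rw [DWAux.cnt]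
        exact Finset.card_ne_zero_of_mem hmem
      have hne' : DWAux.cnt p q' q ≠ 0 := by rw [← hcnt q]; exact hne
      obtain ⟨l, hl⟩ := Finset.card_pos.mp (Nat.pos_of_ne_zero hne')
      have hdvd : (p : ℤ) ∣ (q' * (l : ℤ) ^ 2 - q) := (Finset.mem_filter.mp hl).2
      refine ⟨q' * (l : ℤ), ?_⟩
      rw [Int.modEq_iff_dvd]
      have : (q' * (l : ℤ)) ^ 2 - q * q' = q' * (q' * (l : ℤ) ^ 2 - q) := by ring
      rw [this]
      exact hdvd.mul_left q'
  · rintro ⟨rfl, a, ha⟩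
    intro k
    haveI : NeZero p := ⟨hp.ne'⟩
    have hQ : IsUnit (q : ZMod p) := DWAux.isUnit_cast hq
    have hQ' : IsUnit (q' : ZMod p) := DWAux.isUnit_cast hq'
    have hA2 : (q : ZMod p) * (q' : ZMod p) = (a : ZMod p) ^ 2 := by
      have : ((q * q' : ℤ) : ZMod p) = ((a ^ 2 : ℤ) : ZMod p) :=
        (ZMod.intCast_eq_intCast_iff _ _ _).mpr ha
      push_cast at this
      exact this
    have hAu : IsUnit ((a : ZMod p)) := by
      apply isUnit_of_dvd_unit (dvd_pow_self _ two_ne_zero)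
      rw [← hA2]
      exact hQ.mul hQ'
    set uq := hQ.unit with huq
    set ua := hAu.unit with hua
    have h1 : ((uq : (ZMod p)ˣ) : ZMod p) = (q : ZMod p) := hQ.unit_spec
    have h2 : ((ua : (ZMod p)ˣ) : ZMod p) = (a : ZMod p) := hAu.unit_spec
    have h3 : ((uq⁻¹ : (ZMod p)ˣ) : ZMod p) * (q : ZMod p) = 1 := by
      rw [← h1, ← Units.val_mul, inv_mul_cancel, Units.val_one]
    have key : (q' : ZMod p) = (q : ZMod p) * (((uq⁻¹ * ua : (ZMod p)ˣ)) : ZMod p) ^ 2 := by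
      rw [Units.val_mul, h2]
      have e1 : (q : ZMod p) * (((uq⁻¹ : (ZMod p)ˣ) : ZMod p) * (a : ZMod p)) ^ 2
          = (((uq⁻¹ : (ZMod p)ˣ) : ZMod p) * (q : ZMod p))
            * ((((uq⁻¹ : (ZMod p)ˣ) : ZMod p) * (q : ZMod p)) * (q' : ZMod p)) := by
        have : ((a : ZMod p)) ^ 2 = (q : ZMod p) * (q' : ZMod p) := hA2.symm
        rw [mul_pow, this]
        ring
      rw [e1, h3]
      ring
    have hcnt : ∀ b : ℤ, DWAux.cnt p q' b = DWAux.cnt p q b :=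
      fun b => DWAux.cnt_shift q q' b (uq⁻¹ * ua) key
    have hB1 := DWAux.invB hp q k
    have hB2 := DWAux.invB hp q' k
    have : (p : ℂ) * dwInvariant k p q = (p : ℂ) * dwInvariant k p q' := by
      rw [hB1, hB2]
      exact Finset.sum_congr rfl fun b _ => by rw [hcnt b]
    exact mul_left_cancel₀ (DWAux.pC_ne hp) this
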